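/- Let (a,b) be a fictitious-play trajectory. Suppose Alice's cut in round t satisfies 0 < a_t < 1, and let τ ≥ t be such that round τ−1 is axis-crossing and no round strictly between t−1 and τ−1 is axis-crossing (i.e. τ−1 is the first axis-crossing round strictly after t−1). Then ρ_τ ≥ ⌊ρ_{t−1}⌋ + 1. -/
import Mathlib


open MeasureTheory

/-- Bob's choice of the left or right piece. -/
inductive Choice
  | L
  | R
deriving DecidableEq

/-- The cumulative valuation `V(x) = ∫_0^x v`. -/
noncomputable def cumul (v : ℝ → ℝ) (x : ℝ) : ℝ := ∫ y in (0:ℝ)..x, v y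

/-- `v` is an integrable value density on `[0,1]`, bounded between `lo` and `hi`,
integrating to `1`. -/
def IsDensity (lo hi : ℝ) (v : ℝ → ℝ) : Prop :=
  IntervalIntegrable v volume 0 1 ∧
  (∀ x ∈ Set.Icc (0:ℝ) 1, lo ≤ v x ∧ v x ≤ hi) ∧
  (∫ y in (0:ℝ)..1, v y) = 1

/-- Alice's round-`t` utility: if Bob picks `L` she gets `[a_t,1]`, else `[0,a_t]`. -/
noncomputable def uA (vA : ℝ → ℝ) (a : ℕ → ℝ) (b : ℕ → Choice) (t : ℕ) : ℝ :=
  if b t = Choice.L then 1 - cumul vA (a t) else cumul vA (a t)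

/-- Bob's round-`t` utility: if he picks `L` he gets `[0,a_t]`, else `[a_t,1]`. -/
noncomputable def uB (vB : ℝ → ℝ) (a : ℕ → ℝ) (b : ℕ → Choice) (t : ℕ) : ℝ :=
  if b t = Choice.L then cumul vB (a t) else 1 - cumul vB (a t)

/-- `α_t = r_t − ℓ_t`: number of `R` choices minus number of `L` choices up to round `t`. -/
noncomputable def alphaFP (b : ℕ → Choice) (t : ℕ) : ℝ :=
  ∑ i ∈ Finset.Icc 1 t, (if b i = Choice.R then (1:ℝ) else -1)

/-- `β_t = Σ_{i=1}^t (2 V_B(a_i) − 1)`. -/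
noncomputable def betaFP (vB : ℝ → ℝ) (a : ℕ → ℝ) (t : ℕ) : ℝ :=
  ∑ i ∈ Finset.Icc 1 t, (2 * cumul vB (a i) - 1)

/-- The radius `ρ_t = |α_t| + |β_t|`. -/
noncomputable def rhoFP (vB : ℝ → ℝ) (a : ℕ → ℝ) (b : ℕ → Choice) (t : ℕ) : ℝ :=
  |alphaFP b t| + |betaFP vB a t|

/-- `(a,b)` is a fictitious-play trajectory. -/
def IsFictitiousPlay (vB : ℝ → ℝ) (a : ℕ → ℝ) (b : ℕ → Choice) : Prop :=
  ∀ t : ℕ,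
    (0 < alphaFP b t → a (t+1) = 1) ∧
    (alphaFP b t < 0 → a (t+1) = 0) ∧
    (0 < betaFP vB a t → b (t+1) = Choice.L) ∧
    (betaFP vB a t < 0 → b (t+1) = Choice.R)

/-- Round `t` is axis-crossing. -/
def AxisCrossing (vB : ℝ → ℝ) (a : ℕ → ℝ) (b : ℕ → Choice) (t : ℕ) : Prop :=
  alphaFP b t = 0 ∨
  (betaFP vB a t ≤ 0 ∧ 0 < betaFP vB a (t+1)) ∨
  (0 ≤ betaFP vB a t ∧ betaFP vB a (t+1) < 0)

lemma cumul_bounds (lo hi : ℝ) (v : ℝ → ℝ) (hv : IsDensity lo hi v)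
    (x : ℝ) (hx : x ∈ Set.Icc (0:ℝ) 1) :
    lo * x ≤ cumul v x ∧ cumul v x ≤ 1 - lo * (1 - x) := by
  obtain ⟨hint, hbd, hone⟩ := hv
  have h1 : IntervalIntegrable v volume 0 x := by
    apply hint.mono_set
    rw [Set.uIcc_of_le hx.1, Set.uIcc_of_le (by norm_num)]
    exact Set.Icc_subset_Icc le_rfl hx.2
  have h2 : IntervalIntegrable v volume x 1 := by
    apply hint.mono_set
    rw [Set.uIcc_of_le hx.2, Set.uIcc_of_le (by norm_num)]
    exact Set.Icc_subset_Icc hx.1 le_rfl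
  constructor
  · have : (∫ y in (0:ℝ)..x, lo) ≤ ∫ y in (0:ℝ)..x, v y := by
      apply intervalIntegral.integral_mono_on hx.1 intervalIntegrable_const h1
      intro y hy
      exact (hbd y ⟨hy.1, le_trans hy.2 hx.2⟩).1
    simpa [mul_comm, cumul] using this
  · have hadd : (∫ y in (0:ℝ)..x, v y) + (∫ y in x..(1:ℝ), v y) = ∫ y in (0:ℝ)..1, v y :=
      intervalIntegral.integral_add_adjacent_intervals h1 h2
    have hmono : (∫ y in x..(1:ℝ), lo) ≤ ∫ y in x..(1:ℝ), v y := by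
      apply intervalIntegral.integral_mono_on hx.2 intervalIntegrable_const h2
      intro y hy
      exact (hbd y ⟨le_trans hx.1 hy.1, hy.2⟩).1
    have hc : (∫ y in x..(1:ℝ), lo) = lo * (1 - x) := by simp [mul_comm]
    rw [hone] at hadd
    unfold cumul
    linarith [hc ▸ hmono]

lemma alphaFP_succ (b : ℕ → Choice) (s : ℕ) :
    alphaFP b (s+1) = alphaFP b s + (if b (s+1) = Choice.R then (1:ℝ) else -1) := by
  unfold alphaFP
  rw [Finset.sum_Icc_succ_top (by omega : 1 ≤ s+1)]

lemma betaFP_succ (vB : ℝ → ℝ) (a : ℕ → ℝ) (s : ℕ) :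
    betaFP vB a (s+1) = betaFP vB a s + (2 * cumul vB (a (s+1)) - 1) := by
  unfold betaFP
  rw [Finset.sum_Icc_succ_top (by omega : 1 ≤ s+1)]

lemma alphaFP_int (b : ℕ → Choice) (s : ℕ) : ∃ z : ℤ, alphaFP b s = (z:ℝ) := by
  induction s with
  | zero => exact ⟨0, by simp [alphaFP]⟩
  | succ n ih =>
    obtain ⟨z, hz⟩ := ih
    rw [alphaFP_succ]
    by_cases h : b (n+1) = Choice.R
    · exact ⟨z+1, by rw [if_pos h, hz]; push_cast; ring⟩
    · exact ⟨z-1, by rw [if_neg h, hz]; push_cast; ring⟩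

lemma int_ge_one {x : ℝ} (w : ℤ) (hw : x = (w:ℝ)) (h0 : 0 ≤ x) (hne : x ≠ 0) : 1 ≤ x := by
  subst hw
  have h1 : 0 < w := by exact_mod_cast lt_of_le_of_ne h0 (Ne.symm hne)
  exact_mod_cast h1

lemma floor_succ_le {x y : ℝ} (n : ℕ) (h1 : x < n + 1) (h2 : (n:ℝ) + 1 ≤ y) :
    (⌊x⌋:ℝ) + 1 ≤ y := by
  have hz : ⌊x⌋ < (n:ℤ) + 1 := Int.floor_lt.mpr (by push_cast; linarith)
  have hz' : ⌊x⌋ ≤ (n:ℤ) := by omega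
  have : (⌊x⌋:ℝ) ≤ (n:ℝ) := by exact_mod_cast hz'
  linarith
set_option maxHeartbeats 1600000 in
/-- If Alice cuts strictly inside the cake in round `t` and `τ−1` is the
first axis-crossing round strictly after `t−1`, then `ρ_τ ≥ ⌊ρ_{t−1}⌋ + 1`. -/
theorem middle_cut_increases_radius
    (δ Δ : ℝ) (hδ : 0 < δ) (hδΔ : δ ≤ Δ)
    (vA vB : ℝ → ℝ) (hA : IsDensity δ Δ vA) (hB : IsDensity δ Δ vB)
    (a : ℕ → ℝ) (b : ℕ → Choice)
    (ha : ∀ t : ℕ, 1 ≤ t → a t ∈ Set.Icc (0:ℝ) 1)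
    (hfp : IsFictitiousPlay vB a b)
    (t τ : ℕ) (ht : 1 ≤ t)
    (ha0 : 0 < a t) (ha1 : a t < 1)
    (hτt : t ≤ τ) (hstrict : t - 1 < τ - 1)
    (hcross : AxisCrossing vB a b (τ - 1))
    (hfirst : ∀ s : ℕ, t - 1 < s → s < τ - 1 → ¬ AxisCrossing vB a b s) :
    (⌊rhoFP vB a b (t - 1)⌋ : ℝ) + 1 ≤ rhoFP vB a b τ := by
  obtain ⟨u, rfl⟩ : ∃ u, t = u + 1 := ⟨t - 1, by omega⟩
  obtain ⟨m, rfl⟩ : ∃ m, τ = u + m + 2 := ⟨τ - u - 2, by omega⟩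
  have e1 : u + 1 - 1 = u := by omega
  have e2 : u + m + 2 - 1 = u + m + 1 := by omega
  rw [e1] at hfirst ⊢
  rw [e2] at hcross hfirst
  unfold AxisCrossing at hcross
  rw [show u + m + 1 + 1 = u + m + 2 from by omega] at hcross
  obtain ⟨hBint, hBbd, hBone⟩ := hB
  have hc1 : cumul vB 1 = 1 := by simpa [cumul] using hBone
  have hc0 : cumul vB 0 = 0 := by simp [cumul]
  have hcum : ∀ x ∈ Set.Icc (0:ℝ) 1, 0 ≤ cumul vB x ∧ cumul vB x ≤ 1 := by
    intro x hx
    obtain ⟨h1, h2⟩ := cumul_bounds δ Δ vB ⟨hBint, hBbd, hBone⟩ x hx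
    constructor
    · nlinarith [hx.1, hδ.le]
    · nlinarith [hx.2, hδ.le]
  -- α_{t-1} = 0
  have hαu : alphaFP b u = 0 := by
    rcases lt_trichotomy (alphaFP b u) 0 with h | h | h
    · have h0 := (hfp u).2.1 h; rw [h0] at ha0; linarith
    · exact h
    · have h0 := (hfp u).1 h; rw [h0] at ha1; linarith
  -- the sign σ
  obtain ⟨σ, hσdef⟩ : ∃ σ : ℝ, σ = alphaFP b (u+1) := ⟨_, rfl⟩
  have hσ : σ = 1 ∨ σ = -1 := by
    rw [hσdef, alphaFP_succ, hαu]
    by_cases h : b (u+1) = Choice.R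
    · left; rw [if_pos h]; ring
    · right; rw [if_neg h]; ring
  have hσσ : σ * σ = 1 := by rcases hσ with h|h <;> rw [h] <;> ring
  have hσabs : ∀ x : ℝ, |σ * x| = |x| := by
    intro x; rcases hσ with h|h <;> rw [h] <;> simp
  have hσne : σ ≠ 0 := by rcases hσ with h|h <;> rw [h] <;> norm_num
  have hAt' : σ * alphaFP b (u+1) = 1 := by rw [← hσdef]; exact hσσ
  -- c₀ ≤ 0
  have hc₀ : σ * betaFP vB a u ≤ 0 := by
    rcases lt_trichotomy (betaFP vB a u) 0 with h | h | h
    · have hb := (hfp u).2.2.2 h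
      have hs1 : σ = 1 := by rw [hσdef, alphaFP_succ, hαu, if_pos hb]; ring
      rw [hs1]; linarith
    · rw [h]; simp
    · have hb := (hfp u).2.2.1 h
      have hs1 : σ = -1 := by
        rw [hσdef, alphaFP_succ, hαu, if_neg (by simp [hb])]; ring
      rw [hs1]; linarith
  -- e bounds
  have haI : a (u+1) ∈ Set.Icc (0:ℝ) 1 := ha (u+1) (by omega)
  have hVt := cumul_bounds δ Δ vB ⟨hBint, hBbd, hBone⟩ (a (u+1)) haI
  have hV0 : 0 < cumul vB (a (u+1)) := lt_of_lt_of_le (by nlinarith) hVt.1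
  have hV1 : cumul vB (a (u+1)) < 1 := lt_of_le_of_lt hVt.2 (by nlinarith)
  obtain ⟨e, hedef⟩ : ∃ e : ℝ, e = σ * (2 * cumul vB (a (u+1)) - 1) := ⟨_, rfl⟩
  have he1 : -1 < e := by rcases hσ with h|h <;> rw [hedef, h] <;> nlinarith
  have he2 : e < 1 := by rcases hσ with h|h <;> rw [hedef, h] <;> nlinarith
  have hβu1 : σ * betaFP vB a (u+1) = σ * betaFP vB a u + e := by
    rw [betaFP_succ, hedef]; ring
  -- step lemmas
  have hstep_beta : ∀ s, 0 < σ * alphaFP b s →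
      σ * betaFP vB a (s+1) = σ * betaFP vB a s + 1 := by
    intro s hs
    rcases hσ with h|h
    · rw [h, one_mul] at hs
      have h0 := (hfp s).1 hs
      rw [h, betaFP_succ, h0, hc1]; ring
    · rw [h] at hs
      have hneg : alphaFP b s < 0 := by linarith
      have h0 := (hfp s).2.1 hneg
      rw [h, betaFP_succ, h0, hc0]; ring
  have hstep_alpha_neg : ∀ s, σ * betaFP vB a s < 0 →
      σ * alphaFP b (s+1) = σ * alphaFP b s + 1 := by
    intro s hs
    rcases hσ with h|h
    · rw [h, one_mul] at hs
      have hb := (hfp s).2.2.2 hs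
      rw [h, alphaFP_succ, if_pos hb]; ring
    · have hpos : 0 < betaFP vB a s := by rw [h] at hs; linarith
      have hb := (hfp s).2.2.1 hpos
      rw [h, alphaFP_succ, if_neg (by simp [hb])]; ring
  have hstep_alpha_pos : ∀ s, 0 < σ * betaFP vB a s →
      σ * alphaFP b (s+1) = σ * alphaFP b s - 1 := by
    intro s hs
    rcases hσ with h|h
    · rw [h, one_mul] at hs
      have hb := (hfp s).2.2.1 hs
      rw [h, alphaFP_succ, if_neg (by simp [hb])]; ring
    · have hneg : betaFP vB a s < 0 := by rw [h] at hs; linarith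
      have hb := (hfp s).2.2.2 hneg
      rw [h, alphaFP_succ, if_pos hb]; ring
  have hstep_alpha_pm : ∀ s, σ * alphaFP b (s+1) = σ * alphaFP b s + 1 ∨
      σ * alphaFP b (s+1) = σ * alphaFP b s - 1 := by
    intro s
    rcases hσ with h|h <;> by_cases hb : b (s+1) = Choice.R
    · left; rw [h, alphaFP_succ, if_pos hb]; ring
    · right; rw [h, alphaFP_succ, if_neg hb]; ring
    · right; rw [h, alphaFP_succ, if_pos hb]; ring
    · left; rw [h, alphaFP_succ, if_neg hb]; ring
  -- last-round β bound
  have hβτ_ge : σ * betaFP vB a (u+m+1) - 1 ≤ σ * betaFP vB a (u+m+2) := by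
    have hV := hcum (a (u+m+2)) (ha (u+m+2) (by omega))
    have hβs := betaFP_succ vB a (u+m+1)
    rw [show u+m+1+1 = u+m+2 from by omega] at hβs
    rcases hσ with h|h <;> rw [h] <;> linarith [hV.1, hV.2, hβs]
  -- main invariant
  have claim1 : ∀ j, j ≤ m →
      (σ * betaFP vB a (u+1+j) = σ * betaFP vB a (u+1) + j) ∧
      0 ≤ σ * alphaFP b (u+1+j) ∧ (j < m → 1 ≤ σ * alphaFP b (u+1+j)) := by
    intro j
    induction j with
    | zero =>
      intro _
      refine ⟨by simp, by rw [show u+1+0 = u+1 from rfl, hAt']; norm_num,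
        fun _ => by rw [show u+1+0 = u+1 from rfl, hAt']⟩
    | succ j ih =>
      intro hj
      have hjm : j < m := by omega
      obtain ⟨ihβ, ihα0, ihα1⟩ := ih (by omega)
      have hA1 : 1 ≤ σ * alphaFP b (u+1+j) := ihα1 hjm
      have hβ : σ * betaFP vB a (u+1+j+1) = σ * betaFP vB a (u+1+j) + 1 :=
        hstep_beta _ (by linarith)
      have hidx : u+1+(j+1) = u+1+j+1 := by omega
      have hβ' : σ * betaFP vB a (u+1+(j+1)) = σ * betaFP vB a (u+1) + ((j:ℝ)+1) := by
        rw [hidx, hβ, ihβ]; ring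
      have h0 : 0 ≤ σ * alphaFP b (u+1+(j+1)) := by
        rcases hstep_alpha_pm (u+1+j) with h|h <;> rw [hidx, h] <;> linarith
      refine ⟨by rw [hβ']; push_cast; ring, h0, ?_⟩
      intro hj1
      have hnc := hfirst (u+1+(j+1)) (by omega) (by omega)
      have hne : alphaFP b (u+1+(j+1)) ≠ 0 := by
        intro hz; exact hnc (Or.inl hz)
      have hne' : σ * alphaFP b (u+1+(j+1)) ≠ 0 := mul_ne_zero hσne hne
      obtain ⟨z, hz⟩ := alphaFP_int b (u+1+(j+1))
      have hzz : ∃ w : ℤ, σ * alphaFP b (u+1+(j+1)) = (w:ℝ) := by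
        rcases hσ with h|h
        · exact ⟨z, by rw [h, one_mul, hz]⟩
        · exact ⟨-z, by rw [h, hz]; push_cast; ring⟩
      obtain ⟨w, hw⟩ := hzz
      exact int_ge_one w hw h0 hne'
  -- no small-negative c inside the window
  have claim2 : ∀ j, j < m →
      σ * betaFP vB a (u+1+j) ≤ -1 ∨ 0 < σ * betaFP vB a (u+1+j) := by
    intro j hj
    by_contra hcon
    push_neg at hcon
    obtain ⟨h1, h2⟩ := hcon
    have hb1 := (claim1 j (by omega)).1
    have hb2 := (claim1 (j+1) (by omega)).1
    rw [show u+1+(j+1) = u+1+j+1 from by omega] at hb2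
    have hstep : σ * betaFP vB a (u+1+j+1) = σ * betaFP vB a (u+1+j) + 1 := by
      rw [hb1, hb2]; push_cast; ring
    have hnc := hfirst (u+1+j) (by omega) (by omega)
    apply hnc
    unfold AxisCrossing
    rcases hσ with h|h
    · rw [h, one_mul] at h1 h2 hstep
      exact Or.inr (Or.inl ⟨h2, by linarith⟩)
    · rw [h] at h1 h2 hstep
      exact Or.inr (Or.inr ⟨by linarith, by linarith⟩)
  -- window endpoints
  have hβw : σ * betaFP vB a (u+m+1) = σ * betaFP vB a (u+1) + m := by
    have h := (claim1 m le_rfl).1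
    rwa [show u+1+m = u+m+1 from by omega] at h
  have hA0w : 0 ≤ σ * alphaFP b (u+m+1) := by
    have h := (claim1 m le_rfl).2.1
    rwa [show u+1+m = u+m+1 from by omega] at h
  have hρu : rhoFP vB a b u = -(σ * betaFP vB a u) := by
    unfold rhoFP
    rw [hαu, abs_zero, ← hσabs (betaFP vB a u), abs_of_nonpos hc₀]
    ring
  rw [hρu]
  rcases le_or_gt (σ * betaFP vB a (u+m+1)) 0 with hP | hQ
  · -- case P : c(τ-1) ≤ 0
    have hAeq : ∀ j, j ≤ m → σ * alphaFP b (u+1+j) = 1 + j := by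
      intro j
      induction j with
      | zero => intro _; rw [show u+1+0 = u+1 from rfl, hAt']; norm_num
      | succ j ih =>
        intro hj
        have hcj : σ * betaFP vB a (u+1+j) < 0 := by
          have hb := (claim1 j (by omega)).1
          have hjm : (j:ℝ) + 1 ≤ (m:ℝ) := by exact_mod_cast (show j+1 ≤ m from by omega)
          rw [hb]; linarith
        have hstep := hstep_alpha_neg (u+1+j) hcj
        rw [show u+1+(j+1) = u+1+j+1 from by omega, hstep, ih (by omega)]
        push_cast; ring
    have hAτ1 : σ * alphaFP b (u+m+1) = 1 + m := by
      have h := hAeq m le_rfl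
      rwa [show u+1+m = u+m+1 from by omega] at h
    have hαne : alphaFP b (u+m+1) ≠ 0 := by
      intro hz
      rw [hz, mul_zero] at hAτ1
      have : (0:ℝ) ≤ m := Nat.cast_nonneg m
      linarith
    have hβτ : σ * betaFP vB a (u+m+2) = σ * betaFP vB a (u+m+1) + 1 := by
      have h := hstep_beta (u+m+1) (by rw [hAτ1]; positivity)
      rwa [show u+m+1+1 = u+m+2 from by omega] at h
    have hgt : -1 < σ * betaFP vB a (u+m+1) := by
      rcases hcross with h | h | h
      · exact absurd h hαne
      · rcases hσ with hs|hs
        · rw [hs, one_mul] at hβτ ⊢; linarith [h.2]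
        · rw [hs] at hβτ ⊢; linarith [h.1, h.2]
      · rcases hσ with hs|hs
        · rw [hs, one_mul] at hβτ ⊢; linarith [h.1]
        · rw [hs] at hβτ ⊢; linarith [h.1, h.2]
    rcases lt_or_eq_of_le hP with hlt | heq
    · -- c(τ-1) < 0 : α_τ = m+2
      have hstep := hstep_alpha_neg (u+m+1) hlt
      rw [show u+m+1+1 = u+m+2 from by omega] at hstep
      have hατ : σ * alphaFP b (u+m+2) = (m:ℝ) + 2 := by rw [hstep, hAτ1]; ring
      have hρ : (m:ℝ) + 2 ≤ rhoFP vB a b (u+m+2) := by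
        unfold rhoFP
        rw [← hσabs (alphaFP b (u+m+2)), ← hσabs (betaFP vB a (u+m+2)), hατ]
        have h1 := abs_nonneg (σ * betaFP vB a (u+m+2))
        rw [abs_of_nonneg (by positivity : (0:ℝ) ≤ (m:ℝ)+2)]
        linarith
      apply floor_succ_le (m+1) (by push_cast; linarith) (by push_cast; linarith)
    · -- c(τ-1) = 0
      have heq' : σ * betaFP vB a (u+m+1) = 0 := heq
      have hβτ1 : σ * betaFP vB a (u+m+2) = 1 := by rw [hβτ, heq']; ring
      have hαabs : (m:ℝ) ≤ |σ * alphaFP b (u+m+2)| := by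
        rcases hstep_alpha_pm (u+m+1) with h|h <;>
        · rw [show u+m+1+1 = u+m+2 from by omega] at h
          refine le_trans ?_ (le_abs_self _)
          rw [h, hAτ1]; linarith
      have hρ : (m:ℝ) + 1 ≤ rhoFP vB a b (u+m+2) := by
        unfold rhoFP
        rw [← hσabs (alphaFP b (u+m+2)), ← hσabs (betaFP vB a (u+m+2)), hβτ1]
        simp only [abs_one]
        linarith
      apply floor_succ_le m (by linarith) (by linarith)
  · -- case Q : c(τ-1) > 0, must have α(τ-1) = 0
    have hA0 : σ * alphaFP b (u+m+1) = 0 := by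
      rcases lt_or_eq_of_le hA0w with hpos | heq
      · exfalso
        have hβτ : σ * betaFP vB a (u+m+2) = σ * betaFP vB a (u+m+1) + 1 := by
          have h := hstep_beta (u+m+1) hpos
          rwa [show u+m+1+1 = u+m+2 from by omega] at h
        have hαne : alphaFP b (u+m+1) ≠ 0 := by
          intro hz; rw [hz, mul_zero] at hpos; exact lt_irrefl _ hpos
        rcases hcross with h | h | h
        · exact hαne h
        · rcases hσ with hs|hs
          · rw [hs, one_mul] at hQ; linarith [h.1]
          · rw [hs] at hβτ hQ; linarith [h.2]
        · rcases hσ with hs|hs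
          · rw [hs, one_mul] at hβτ hQ; linarith [h.2]
          · rw [hs] at hQ; linarith [h.1]
      · exact heq.symm
    have hAτabs : |σ * alphaFP b (u+m+2)| = 1 := by
      rcases hstep_alpha_pm (u+m+1) with h|h <;>
      · rw [show u+m+1+1 = u+m+2 from by omega] at h
        rw [h, hA0]
        norm_num
    classical
    have hex : ∃ j, 0 < σ * betaFP vB a (u+1+j) :=
      ⟨m, by rw [show u+1+m = u+m+1 from by omega]; exact hQ⟩
    obtain ⟨k, hk, hkmin⟩ : ∃ k, (0 < σ * betaFP vB a (u+1+k)) ∧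
        ∀ j, j < k → ¬ (0 < σ * betaFP vB a (u+1+j)) :=
      ⟨Nat.find hex, Nat.find_spec hex, fun j hj => Nat.find_min hex hj⟩
    have hkm : k ≤ m := by
      by_contra hcon
      exact hkmin m (by omega) (by rw [show u+1+m = u+m+1 from by omega]; exact hQ)
    have hk' : 0 < σ * betaFP vB a (u+1) + (k:ℝ) := by
      have h := (claim1 k hkm).1
      rw [h] at hk; exact hk
    have hkneg : ∀ j, j < k → σ * betaFP vB a (u+1+j) < 0 := by
      intro j hj
      rcases claim2 j (by omega) with h|h
      · linarith
      · exact absurd h (hkmin j hj)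
    have hAk : ∀ j, j ≤ k → σ * alphaFP b (u+1+j) = 1 + j := by
      intro j
      induction j with
      | zero => intro _; rw [show u+1+0 = u+1 from rfl, hAt']; norm_num
      | succ j ih =>
        intro hj
        have hstep := hstep_alpha_neg (u+1+j) (hkneg j (by omega))
        rw [show u+1+(j+1) = u+1+j+1 from by omega, hstep, ih (by omega)]
        push_cast; ring
    have hAdec : ∀ i, k + i ≤ m → σ * alphaFP b (u+1+(k+i)) = 1 + k - i := by
      intro i
      induction i with
      | zero =>
        intro _
        have h := hAk k le_rfl
        simp only [Nat.add_zero, Nat.cast_zero]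
        rw [h]; ring
      | succ i ih =>
        intro hi
        have hcpos : 0 < σ * betaFP vB a (u+1+(k+i)) := by
          have h2 := (claim1 (k+i) (by omega)).1
          rw [h2]
          push_cast
          have : (0:ℝ) ≤ (i:ℝ) := Nat.cast_nonneg i
          linarith
        have hstep := hstep_alpha_pos (u+1+(k+i)) hcpos
        rw [show u+1+(k+(i+1)) = u+1+(k+i)+1 from by omega, hstep, ih (by omega)]
        push_cast; ring
    have hmk : (m:ℝ) = 2*(k:ℝ) + 1 := by
      have h := hAdec (m - k) (by omega)
      rw [show u+1+(k+(m-k)) = u+m+1 from by omega, hA0] at h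
      rw [Nat.cast_sub hkm] at h
      linarith
    have hβτ1 : (k:ℝ) + 1 < σ * betaFP vB a (u+m+1) := by
      rw [hβw]; linarith
    have hβτge : (k:ℝ) < σ * betaFP vB a (u+m+2) := by linarith [hβτ_ge]
    have hfl : -(σ * betaFP vB a u) < (k:ℝ) + 1 := by linarith [hβu1]
    have hρτ : rhoFP vB a b (u+m+2) = 1 + |σ * betaFP vB a (u+m+2)| := by
      unfold rhoFP
      rw [← hσabs (alphaFP b (u+m+2)), ← hσabs (betaFP vB a (u+m+2)), hAτabs]
    have habs2 : (k:ℝ) < |σ * betaFP vB a (u+m+2)| :=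
      lt_of_lt_of_le hβτge (le_abs_self _)
    rw [hρτ]
    apply floor_succ_le k hfl (by linarith)
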